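/- Let y and z be any two solutions of problem (H). Then the Wronskian W_n(y,z) is constant on each of the integer intervals (−∞,−1] and [1,∞); denoting these constant values by ω⁻ and ω⁺ respectively, one has ω⁻ = d₁ d₂ ω⁺ and W₀(y,z) = −d₂ ω⁺. -/

import Mathlib

/- Problem (H): the second order linear difference equation
   −Δ²y_{n−1} + p_n y_n = 0 on ℤ₀ = ℤ \ {0,1}, with impulse conditions
   y_{−1} = d₁ y₁ and Δy_{−1} = d₂ Δy₁, for a sequence y : ℤ → ℂ. -/
def IsSolH (p : ℤ → ℂ) (d₁ d₂ : ℂ) (y : ℤ → ℂ) : Prop :=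
  (∀ n : ℤ, n ≠ 0 → n ≠ 1 → -(y (n + 1) - 2 * y n + y (n - 1)) + p n * y n = 0) ∧
  y (-1) = d₁ * y 1 ∧
  y 0 - y (-1) = d₂ * (y 2 - y 1)

/-- The Wronskian W_n(y,z) = y_n z_{n+1} − y_{n+1} z_n. -/
def Wr (y z : ℤ → ℂ) (n : ℤ) : ℂ := y n * z (n + 1) - y (n + 1) * z n

/-- the Wronskian of two solutions of (H) is constant on (−∞,−1]
and on [1,∞), with ω⁻ = d₁ d₂ ω⁺ and W₀(y,z) = −d₂ ω⁺. -/
theorem wronskian_of_solutions (p : ℤ → ℂ) (d₁ d₂ : ℂ) (hd₁ : d₁ ≠ 0) (hd₂ : d₂ ≠ 0)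
    (y z : ℤ → ℂ) (hy : IsSolH p d₁ d₂ y) (hz : IsSolH p d₁ d₂ z) :
    ∃ ωminus ωplus : ℂ,
      (∀ n : ℤ, n ≤ -1 → Wr y z n = ωminus) ∧
      (∀ n : ℤ, 1 ≤ n → Wr y z n = ωplus) ∧
      ωminus = d₁ * d₂ * ωplus ∧
      Wr y z 0 = -d₂ * ωplus := by
  obtain ⟨hyeq, hy1, hy2⟩ := hy
  obtain ⟨hzeq, hz1, hz2⟩ := hz
  have key : ∀ n : ℤ, n ≠ 0 → n ≠ 1 → Wr y z n = Wr y z (n - 1) := by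
    intro n h0 h1
    have ey := hyeq n h0 h1
    have ez := hzeq n h0 h1
    simp only [Wr, sub_add_cancel]
    linear_combination z n * ey - y n * ez
  refine ⟨Wr y z (-1), Wr y z 1, ?_, ?_, ?_, ?_⟩
  · intro n hn
    refine Int.le_induction_down (motive := fun k _ => Wr y z k = Wr y z (-1)) rfl
      (fun m hm ih => ?_) n hn
    rw [← ih]
    exact (key m (by omega) (by omega)).symm
  · intro n hn
    refine Int.le_induction (motive := fun k _ => Wr y z k = Wr y z 1) rfl
      (fun m hm ih => ?_) n hn
    rw [← ih]
    have := key (m + 1) (by omega) (by omega)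
    simpa using this
  · simp only [Wr]
    norm_num
    rw [hy1, hz1]
    have hy0 : y 0 = d₁ * y 1 + d₂ * (y 2 - y 1) := by linear_combination hy2 + hy1
    have hz0 : z 0 = d₁ * z 1 + d₂ * (z 2 - z 1) := by linear_combination hz2 + hz1
    rw [hy0, hz0]; ring
  · simp only [Wr]
    norm_num
    have hy0 : y 0 = d₁ * y 1 + d₂ * (y 2 - y 1) := by linear_combination hy2 + hy1
    have hz0 : z 0 = d₁ * z 1 + d₂ * (z 2 - z 1) := by linear_combination hz2 + hz1
    rw [hy0, hz0]; ring
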